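/- The quotient group RO(ΠBT²)/SRO(ΠBT²) is isomorphic to ℤ. Moreover, the class of the element 2·1 + Ω₀₁ + Ω₁₀ (the grading of the tensor product ω₁⊗ω₂ of the two tautological line bundles over BT²) does not lie in SRO(ΠBT²). -/

import Mathlib

noncomputable section

namespace BT2

/-- The free abelian group on the six generators `1, σ, Ω₀₀, Ω₀₁, Ω₁₀, Ω₁₁`
(indexed `0, 1, 2, 3, 4, 5`). -/
abbrev F6 : Type := Fin 6 →₀ ℤ

/-- The relation `Ω₀₀ + Ω₀₁ + Ω₁₀ + Ω₁₁ − 2σ + 2·1`. -/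
def rel : F6 :=
  Finsupp.single 2 1 + Finsupp.single 3 1 + Finsupp.single 4 1 + Finsupp.single 5 1
    - 2 • Finsupp.single 1 1 + 2 • Finsupp.single 0 1

/-- The subgroup generated by the relation. -/
def relSub : AddSubgroup F6 := AddSubgroup.closure {rel}

/-- `RO(ΠBT²)`, the quotient of the free abelian group on `1, σ, Ω₀₀, Ω₀₁, Ω₁₀, Ω₁₁`
by the relation `Ω₀₀ + Ω₀₁ + Ω₁₀ + Ω₁₁ = 2σ − 2·1`. -/
abbrev RO2 : Type := F6 ⧸ relSub

/-- The quotient map. -/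
def mk2 : F6 →+ RO2 := QuotientAddGroup.mk' relSub

/-- `SRO(ΠBT²)`, the subgroup of `RO(ΠBT²)` generated by the classes of
`1`, `σ`, `Ω₀₀ + Ω₀₁`, `Ω₁₀ + Ω₁₁`, `Ω₀₀ + Ω₁₀` and `Ω₀₁ + Ω₁₁`. -/
def SRO2 : AddSubgroup RO2 :=
  AddSubgroup.closure
    { mk2 (Finsupp.single 0 1), mk2 (Finsupp.single 1 1),
      mk2 (Finsupp.single 2 1 + Finsupp.single 3 1),
      mk2 (Finsupp.single 4 1 + Finsupp.single 5 1),
      mk2 (Finsupp.single 2 1 + Finsupp.single 4 1),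
      mk2 (Finsupp.single 3 1 + Finsupp.single 5 1) }

/-- The invariant `x ↦ x₂ − x₃ − x₄ + x₅`. -/
def phi : F6 →+ ℤ :=
  Finsupp.applyAddHom (2 : Fin 6) - Finsupp.applyAddHom 3
    - Finsupp.applyAddHom 4 + Finsupp.applyAddHom 5

lemma phi_apply (x : F6) : phi x = x 2 - x 3 - x 4 + x 5 := by
  simp [phi]

lemma phi_rel : phi rel = 0 := by
  simp [phi_apply, rel, Finsupp.single_apply]

lemma relSub_le_ker : relSub ≤ phi.ker := by
  rw [relSub, AddSubgroup.closure_le]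
  intro x hx
  rcases hx with rfl
  exact phi_rel

/-- `phi` descends to `RO2`. -/
def chi : RO2 →+ ℤ := QuotientAddGroup.lift relSub phi relSub_le_ker

lemma chi_mk2 (x : F6) : chi (mk2 x) = phi x := rfl

lemma SRO2_le_ker : SRO2 ≤ chi.ker := by
  rw [SRO2, AddSubgroup.closure_le]
  intro y hy
  simp only [Set.mem_insert_iff, Set.mem_singleton_iff] at hy
  rcases hy with rfl | rfl | rfl | rfl | rfl | rfl <;>
    simp [AddMonoidHom.mem_ker, chi_mk2, phi_apply, Finsupp.single_apply]

lemma mem_gen {y : RO2}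
    (hy : y ∈ ({ mk2 (Finsupp.single 0 1), mk2 (Finsupp.single 1 1),
      mk2 (Finsupp.single 2 1 + Finsupp.single 3 1),
      mk2 (Finsupp.single 4 1 + Finsupp.single 5 1),
      mk2 (Finsupp.single 2 1 + Finsupp.single 4 1),
      mk2 (Finsupp.single 3 1 + Finsupp.single 5 1) } : Set RO2)) : y ∈ SRO2 :=
  AddSubgroup.subset_closure hy

lemma mem_SRO2_of_phi (x : F6) (hx : phi x = 0) : mk2 x ∈ SRO2 := by
  have hdecomp : x = x 0 • Finsupp.single 0 1 + x 1 • Finsupp.single 1 1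
      + x 2 • (Finsupp.single 2 1 + Finsupp.single 3 1)
      + x 4 • (Finsupp.single 4 1 + Finsupp.single 5 1)
      + (x 3 - x 2) • (Finsupp.single 3 1 + Finsupp.single 5 1) := by
    rw [phi_apply] at hx
    ext i
    fin_cases i <;>
      simp [Finsupp.single_apply] <;> omega
  rw [hdecomp]
  simp only [map_add, map_zsmul]
  refine AddSubgroup.add_mem _ (AddSubgroup.add_mem _ (AddSubgroup.add_mem _
    (AddSubgroup.add_mem _ ?_ ?_) ?_) ?_) ?_ <;>
  · exact AddSubgroup.zsmul_mem _ (mem_gen (by simp)) _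

/-- The quotient `RO(ΠBT²)/SRO(ΠBT²)` is isomorphic to `ℤ`, and the class of
`2·1 + Ω₀₁ + Ω₁₀` (the grading of `ω₁⊗ω₂`) does not lie in `SRO(ΠBT²)`. -/
theorem RO2_quot_SRO2 :
    Nonempty ((RO2 ⧸ SRO2) ≃+ ℤ) ∧
    mk2 (2 • Finsupp.single 0 1 + Finsupp.single 3 1 + Finsupp.single 4 1) ∉ SRO2 := by
  constructor
  · -- descend `chi` to the quotient
    set ψ : (RO2 ⧸ SRO2) →+ ℤ := QuotientAddGroup.lift SRO2 chi SRO2_le_ker with hψ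
    have hinj : Function.Injective ψ := by
      rw [injective_iff_map_eq_zero]
      intro a ha
      obtain ⟨y, rfl⟩ := QuotientAddGroup.mk'_surjective SRO2 a
      obtain ⟨x, rfl⟩ := QuotientAddGroup.mk'_surjective relSub y
      have hphi : phi x = 0 := ha
      have : mk2 x ∈ SRO2 := mem_SRO2_of_phi x hphi
      simpa [mk2, QuotientAddGroup.mk'_apply, QuotientAddGroup.eq_zero_iff] using this
    have hsurj : Function.Surjective ψ := by
      intro n
      refine ⟨QuotientAddGroup.mk' SRO2 (mk2 (n • Finsupp.single 2 1)), ?_⟩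
      have : ψ (QuotientAddGroup.mk' SRO2 (mk2 (n • Finsupp.single 2 1)))
          = phi (n • Finsupp.single 2 1) := rfl
      rw [this, map_zsmul, phi_apply]
      simp [Finsupp.single_apply]
    exact ⟨AddEquiv.ofBijective ψ ⟨hinj, hsurj⟩⟩
  · intro h
    have := SRO2_le_ker h
    simp only [AddMonoidHom.mem_ker, chi_mk2, phi_apply] at this
    simp [Finsupp.single_apply] at this

end BT2

end
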